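/- Let 1 ≤ p ≤ 2, q = max(p, 2(p−1)²), k ∈ ℕ, γ > 0, and ρ ∈ ℝ^k with ρ₁ ≥ ρ₂ ≥ ⋯ ≥ ρ_k > 0. Define L_{ρ,γ}(x) = ∑_{j=1}^k ( (γ²ρ_j² + x_j²)^{p/2} − (γρ_j)^p ) and, for 0 ≤ β < β* := 2γ^{2−p} / (q ρ₁^p), define f_{ρ,β,γ}(x) = ∑_{j=1}^k x_j²/ρ_j² − β L_{ρ,γ}(x). Then f_{ρ,β,γ} is a non-negative convex function on ℝ^k. -/

import Mathlib

open Real Set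

noncomputable section

/-- The function `L_{ρ,γ}` for `1 ≤ p ≤ 2`. -/
def Lfun {k : ℕ} (p γ : ℝ) (ρ : Fin k → ℝ) (x : Fin k → ℝ) : ℝ :=
  ∑ j, ((γ ^ 2 * ρ j ^ 2 + x j ^ 2) ^ (p / 2) - (γ * ρ j) ^ p)

/-- Generalized Bernoulli / tangent-line inequality for concave powers. -/
lemma bern_aux {α u v : ℝ} (hα0 : 0 ≤ α) (hα1 : α ≤ 1) (hu : 0 < u) (huv : u ≤ v) :
    v ^ α ≤ u ^ α + α * u ^ (α - 1) * (v - u) := by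
  have hv : 0 < v := lt_of_lt_of_le hu huv
  have hs : (0:ℝ) ≤ (v - u)/u := div_nonneg (by linarith) hu.le
  have hB := rpow_one_add_le_one_add_mul_self (s := (v - u)/u)
    (by linarith : (-1:ℝ) ≤ (v - u)/u) hα0 hα1
  have h1 : 1 + (v - u)/u = v/u := by field_simp; ring
  rw [h1] at hB
  calc v ^ α = (u * (v/u)) ^ α := by rw [mul_div_cancel₀ _ hu.ne']
    _ = u ^ α * (v/u) ^ α := Real.mul_rpow hu.le (by positivity)
    _ ≤ u ^ α * (1 + α * ((v - u)/u)) :=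
        mul_le_mul_of_nonneg_left hB (Real.rpow_nonneg hu.le α)
    _ = u ^ α + α * (u ^ α / u) * (v - u) := by field_simp
    _ = u ^ α + α * u ^ (α - 1) * (v - u) := by rw [Real.rpow_sub_one hu.ne']

set_option maxHeartbeats 1000000

/-- For `1 ≤ p ≤ 2`, `q = max(p, 2(p−1)²)` and `0 ≤ β < 2γ^{2−p}/(q ρ₁^p)`, the function
`f_{ρ,β,γ}(x) = ∑ x_j²/ρ_j² − β L_{ρ,γ}(x)` is non-negative and convex on `ℝᵏ`. -/
theorem f_nonneg_and_convex_le_two (p : ℝ) (hp1 : 1 ≤ p) (hp2 : p ≤ 2)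
    (k : ℕ) (hk : 0 < k) (γ : ℝ) (hγ : 0 < γ)
    (ρ : Fin k → ℝ) (hρpos : ∀ j, 0 < ρ j) (hρanti : Antitone ρ)
    (β : ℝ) (hβ0 : 0 ≤ β)
    (hβ : β < 2 * γ ^ (2 - p) / (max p (2 * (p - 1) ^ 2) * ρ ⟨0, hk⟩ ^ p)) :
    (∀ x : Fin k → ℝ, 0 ≤ (∑ j, x j ^ 2 / ρ j ^ 2) - β * Lfun p γ ρ x) ∧
      ConvexOn ℝ univ (fun x : Fin k → ℝ => (∑ j, x j ^ 2 / ρ j ^ 2) - β * Lfun p γ ρ x) := by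
  classical
  set q : ℝ := max p (2 * (p - 1) ^ 2) with hqdef
  have hα0 : (0:ℝ) ≤ p / 2 := by linarith
  have hα1 : p / 2 ≤ 1 := by linarith
  have hq : p ≤ q := le_max_left _ _
  have hqpos : 0 < q := lt_of_lt_of_le (by linarith) hq
  have hr1 : 0 < ρ ⟨0, hk⟩ := hρpos _
  -- the one-dimensional pieces
  set g : Fin k → ℝ → ℝ := fun j t =>
    t ^ 2 / ρ j ^ 2 - β * ((γ ^ 2 * ρ j ^ 2 + t ^ 2) ^ (p / 2) - (γ * ρ j) ^ p) with hgdef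
  -- basic facts per coordinate
  have hc : ∀ j, (0:ℝ) < γ ^ 2 * ρ j ^ 2 := fun j => by have := hρpos j; positivity
  have hceq : ∀ j, γ ^ 2 * ρ j ^ 2 = (γ * ρ j) ^ 2 := fun j => by ring
  have hcp : ∀ j, (γ ^ 2 * ρ j ^ 2) ^ (p / 2) = (γ * ρ j) ^ p := by
    intro j
    have h0 : 0 ≤ γ * ρ j := by have := hρpos j; positivity
    rw [hceq j, ← Real.rpow_natCast (γ * ρ j) 2, ← Real.rpow_mul h0,
      show ((2:ℕ):ℝ) * (p / 2) = p by push_cast; ring]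
  -- the key coefficient bound
  have key : ∀ j, β * (p / 2) * (γ ^ 2 * ρ j ^ 2) ^ (p / 2 - 1) ≤ 1 / ρ j ^ 2 := by
    intro j
    have hrj : 0 < ρ j := hρpos j
    have hγρ : 0 < γ * ρ j := by positivity
    -- rewrite the power
    have hpow : (γ ^ 2 * ρ j ^ 2) ^ (p / 2 - 1) = γ ^ (p - 2) * (ρ j) ^ (p - 2) := by
      rw [hceq j, ← Real.rpow_natCast (γ * ρ j) 2, ← Real.rpow_mul hγρ.le,
        show ((2:ℕ):ℝ) * (p / 2 - 1) = p - 2 by push_cast; ring, Real.mul_rpow hγ.le hrj.le]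
    have hb1 : β * (q * ρ ⟨0, hk⟩ ^ p) ≤ 2 * γ ^ (2 - p) := by
      have hpos : 0 < q * ρ ⟨0, hk⟩ ^ p := by positivity
      calc β * (q * ρ ⟨0, hk⟩ ^ p)
          ≤ (2 * γ ^ (2 - p) / (q * ρ ⟨0, hk⟩ ^ p)) * (q * ρ ⟨0, hk⟩ ^ p) :=
            mul_le_mul_of_nonneg_right hβ.le hpos.le
        _ = 2 * γ ^ (2 - p) := by field_simp
    have hrle : ρ j ≤ ρ ⟨0, hk⟩ := hρanti (by simp [Fin.le_def])
    have hb2 : p * ρ j ^ p ≤ q * ρ ⟨0, hk⟩ ^ p :=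
      mul_le_mul hq (Real.rpow_le_rpow hrj.le hrle (by linarith)) (by positivity) hqpos.le
    have hb3 : β * (p * ρ j ^ p) ≤ 2 * γ ^ (2 - p) :=
      le_trans (mul_le_mul_of_nonneg_left hb2 hβ0) hb1
    -- multiply by γ^(p-2) > 0
    have hγc : γ ^ (2 - p) * γ ^ (p - 2) = 1 := by
      rw [← Real.rpow_add hγ]; norm_num
    have hγp : (0:ℝ) < γ ^ (p - 2) := Real.rpow_pos_of_pos hγ _
    have hb4 : β * (p * ρ j ^ p) * γ ^ (p - 2) ≤ 2 := by
      calc β * (p * ρ j ^ p) * γ ^ (p - 2) ≤ 2 * γ ^ (2 - p) * γ ^ (p - 2) :=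
            mul_le_mul_of_nonneg_right hb3 hγp.le
        _ = 2 := by rw [mul_assoc, hγc, mul_one]
    -- rewrite ρ^p = ρ^(p-2) * ρ^2
    have hrsplit : ρ j ^ p = ρ j ^ (p - 2) * ρ j ^ 2 := by
      rw [← Real.rpow_natCast (ρ j) 2, ← Real.rpow_add hrj]
      norm_num
    rw [hpow, le_div_iff₀ (by positivity : (0:ℝ) < ρ j ^ 2)]
    rw [hrsplit] at hb4
    nlinarith [hb4]
  -- Nonnegativity of each 1-d piece
  have hg0 : ∀ j t, 0 ≤ g j t := by
    intro j t
    have hB := bern_aux hα0 hα1 (hc j) (by nlinarith [sq_nonneg t] :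
      γ ^ 2 * ρ j ^ 2 ≤ γ ^ 2 * ρ j ^ 2 + t ^ 2)
    have h1 : β * ((γ ^ 2 * ρ j ^ 2 + t ^ 2) ^ (p / 2) - (γ ^ 2 * ρ j ^ 2) ^ (p / 2))
        ≤ β * (p / 2 * (γ ^ 2 * ρ j ^ 2) ^ (p / 2 - 1) * t ^ 2) := by
      apply mul_le_mul_of_nonneg_left _ hβ0
      have : γ ^ 2 * ρ j ^ 2 + t ^ 2 - γ ^ 2 * ρ j ^ 2 = t ^ 2 := by ring
      nlinarith [hB]
    have h2 : β * (p / 2) * (γ ^ 2 * ρ j ^ 2) ^ (p / 2 - 1) * t ^ 2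
        ≤ (1 / ρ j ^ 2) * t ^ 2 :=
      mul_le_mul_of_nonneg_right (key j) (sq_nonneg t)
    have hrj : 0 < ρ j := hρpos j
    have ht : t ^ 2 / ρ j ^ 2 = (1 / ρ j ^ 2) * t ^ 2 := by ring
    rw [hgdef]
    simp only [← hcp j]
    rw [ht]
    nlinarith [h1, h2]
  -- Convexity of each 1-d piece
  have hgconv : ∀ j, ConvexOn ℝ univ (g j) := by
    intro j
    have hrj : 0 < ρ j := hρpos j
    set c : ℝ := γ ^ 2 * ρ j ^ 2 with hcdef
    set C : ℝ := c ^ (p / 2 - 1) with hCdef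
    have hCpos : 0 < C := Real.rpow_pos_of_pos (hc j) _
    set A : ℝ := 1 / ρ j ^ 2 - β * (p / 2) * C with hAdef
    have hA : 0 ≤ A := by have := key j; simp only [hAdef]; linarith
    set ψ : ℝ → ℝ := fun s => (p / 2) * C * s - (c + s) ^ (p / 2) with hψdef
    -- ψ is convex on Ici 0
    have hconc : ConcaveOn ℝ (Ici 0) (fun s : ℝ => (c + s) ^ (p / 2)) := by
      have h := (Real.concaveOn_rpow hα0 hα1).comp_affineMap
        (AffineMap.const ℝ ℝ c + AffineMap.id ℝ ℝ)
      have hfun : ((fun x : ℝ => x ^ (p / 2)) ∘ ⇑(AffineMap.const ℝ ℝ c + AffineMap.id ℝ ℝ))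
          = fun s : ℝ => (c + s) ^ (p / 2) := by
        funext s; simp [Function.comp]
      have hset : Ici (0:ℝ) ⊆ (AffineMap.const ℝ ℝ c + AffineMap.id ℝ ℝ) ⁻¹' (Ici 0) := by
        intro s hs
        have hs' : (0:ℝ) ≤ s := hs
        have hc' : (0:ℝ) < c := hc j
        show (0:ℝ) ≤ (AffineMap.const ℝ ℝ c + AffineMap.id ℝ ℝ) s
        simp only [AffineMap.coe_add, Pi.add_apply, AffineMap.coe_const, Function.const_apply,
          AffineMap.coe_id, id_eq]
        linarith
      rw [hfun] at h
      exact h.subset hset (convex_Ici 0)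
    have hlin : ConvexOn ℝ (Ici (0:ℝ)) (fun s : ℝ => (p / 2) * C * s) := by
      have := (convexOn_id (convex_Ici (0:ℝ))).smul
        (c := (p / 2) * C) (by positivity)
      simpa using this
    have hψconv : ConvexOn ℝ (Ici (0:ℝ)) ψ := by
      have := hlin.sub hconc
      simpa [hψdef, Pi.sub_def] using this
    -- ψ is monotone on Ici 0
    have hψmono : MonotoneOn ψ (Ici (0:ℝ)) := by
      intro s hs t ht hst
      simp only [mem_Ici] at hs ht
      have hB := bern_aux hα0 hα1 (by nlinarith [hc j] : (0:ℝ) < c + s)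
        (by linarith : c + s ≤ c + t)
      have hCs : (c + s) ^ (p / 2 - 1) ≤ C := by
        rw [hCdef]
        exact Real.rpow_le_rpow_of_nonpos (hc j) (by linarith) (by linarith)
      have hd : c + t - (c + s) = t - s := by ring
      rw [hd] at hB
      have h3 : (p / 2) * ((c + s) ^ (p / 2 - 1) * (t - s)) ≤ (p / 2) * (C * (t - s)) :=
        mul_le_mul_of_nonneg_left
          (mul_le_mul_of_nonneg_right hCs (by linarith)) hα0
      simp only [hψdef]
      nlinarith [hB, h3]
    -- composition with t ↦ t²
    have himg : (fun t : ℝ => t ^ 2) '' univ = Ici 0 := by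
      ext y
      constructor
      · rintro ⟨t, -, rfl⟩; exact sq_nonneg t
      · intro hy
        exact ⟨Real.sqrt y, mem_univ _, Real.sq_sqrt hy⟩
    have hsq : ConvexOn ℝ (univ : Set ℝ) (fun t : ℝ => t ^ 2) := even_two.convexOn_pow
    have hcomp : ConvexOn ℝ (univ : Set ℝ) (ψ ∘ fun t : ℝ => t ^ 2) :=
      ConvexOn.comp (himg ▸ hψconv) hsq (himg ▸ hψmono)
    -- assemble
    have hsum : ConvexOn ℝ (univ : Set ℝ)
        (fun t : ℝ => A * t ^ 2 + (β * ψ (t ^ 2) + β * c ^ (p / 2))) := by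
      apply ConvexOn.add
      · simpa using hsq.smul hA
      · apply ConvexOn.add
        · simpa [Function.comp] using hcomp.smul hβ0
        · exact convexOn_const _ convex_univ
    have heq : g j = fun t : ℝ => A * t ^ 2 + (β * ψ (t ^ 2) + β * c ^ (p / 2)) := by
      funext t
      simp only [hgdef, hψdef, hAdef, ← hcp j, ← hcdef]
      ring
    rw [heq]
    exact hsum
  -- rewrite the target as a sum of the 1-d pieces
  have hsum_eq : ∀ x : Fin k → ℝ,
      (∑ j, x j ^ 2 / ρ j ^ 2) - β * Lfun p γ ρ x = ∑ j, g j (x j) := by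
    intro x
    rw [Lfun, Finset.mul_sum, ← Finset.sum_sub_distrib]
  constructor
  · intro x
    rw [hsum_eq x]
    exact Finset.sum_nonneg fun j _ => hg0 j (x j)
  · have hcoord : ∀ j, ConvexOn ℝ (univ : Set (Fin k → ℝ)) (fun x : Fin k → ℝ => g j (x j)) := by
      intro j
      have := (hgconv j).comp_affineMap
        ((LinearMap.proj j : (Fin k → ℝ) →ₗ[ℝ] ℝ).toAffineMap)
      simp only [Set.preimage_univ] at this; exact this
    have H : ∀ s : Finset (Fin k),
        ConvexOn ℝ (univ : Set (Fin k → ℝ)) (fun x : Fin k → ℝ => ∑ j ∈ s, g j (x j)) := by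
      intro s
      induction s using Finset.cons_induction with
      | empty => simpa using convexOn_const (0:ℝ) convex_univ
      | cons a s ha ih =>
        have h := (hcoord a).add ih
        have heq2 : (fun x : Fin k → ℝ => ∑ j ∈ Finset.cons a s ha, g j (x j))
            = fun x => g a (x a) + ∑ j ∈ s, g j (x j) := by
          funext x; rw [Finset.sum_cons]
        rw [heq2]; exact h
    have := H Finset.univ
    convert this using 2 with x
    exact hsum_eq x
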